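/- arXiv:1111.5922 — 3 statements merged into one kernel-verified Lean document; each statement's English description precedes it below -/
import Mathlib

section
/- Let T : A → B be a separating linear map between semisimple regular commutative Banach algebras. For each y in the set Ω_B' = {y ∈ Ω_B : ∃a ∈ A, (Ta)^(y) ≠ 0}, the support of the functional T^t y (the complement in the one-point compactification of Ω_A of the union of its vanishing open sets) is a single point. -/
open WeakDual Topology Filter

variable {A B : Type*} [NormedCommRing A] [NormedAlgebra ℂ A]
  [NormedCommRing B] [NormedAlgebra ℂ B]

/-- The cozero set of the Gelfand transform of `a`. -/
def gelfCoz (a : A) : Set (characterSpace ℂ A) := {x | x a ≠ 0}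

/-- The support of the Gelfand transform of `a`. -/
def gelfSupp (a : A) : Set (characterSpace ℂ A) := closure (gelfCoz a)

/-- `a` has compactly supported Gelfand transform. -/
def HasCompactGelfandSupport (a : A) : Prop := IsCompact (gelfSupp a)

/-- A commutative Banach algebra is Tauberian if elements with compactly supported
Gelfand transform are dense. -/
def Tauberian (A : Type*) [NormedCommRing A] [NormedAlgebra ℂ A] : Prop :=
  Dense {a : A | HasCompactGelfandSupport a}

/-- Regularity. -/
def Regular (A : Type*) [NormedCommRing A] [NormedAlgebra ℂ A] : Prop :=
  ∀ (x : characterSpace ℂ A) (U : Set (characterSpace ℂ A)), IsOpen U → x ∈ U →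
    ∃ a : A, x a = 1 ∧ ∀ y : characterSpace ℂ A, y ∉ U → y a = 0

/-- Semisimplicity. -/
def Semisimple (A : Type*) [NormedCommRing A] [NormedAlgebra ℂ A] : Prop :=
  ∀ a : A, (∀ x : characterSpace ℂ A, x a = 0) → a = 0

/-- Condition (M). -/
def ConditionM (A : Type*) [NormedCommRing A] [NormedAlgebra ℂ A] : Prop :=
  Regular A ∧
  ∀ (x : characterSpace ℂ A) (a : A), x a = 0 →
    ∀ U ∈ 𝓝 x, ∀ ε > (0:ℝ), ∃ b : A,
      (∃ V ∈ 𝓝 x, ∀ y ∈ V, y b = 1) ∧ gelfSupp b ⊆ U ∧ ‖b * a‖ < ε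

/-- `D`-uniform regularity. -/
def DUniformlyRegular (A : Type*) [NormedCommRing A] [NormedAlgebra ℂ A] (D : ℝ) : Prop :=
  ∀ (x : characterSpace ℂ A) (U : Set (characterSpace ℂ A)), IsOpen U → x ∈ U →
    ∀ ε > (0:ℝ), ∃ a : A, x a = 1 ∧ gelfSupp a ⊆ U ∧ ‖a‖ ≤ D + ε

/-- A linear map is separating (disjointness preserving) if `ab = 0 ⇒ Ta·Tb = 0`. -/
def Separating (T : A →ₗ[ℂ] B) : Prop := ∀ a b : A, a * b = 0 → T a * T b = 0

/-- `Ω_B'`: the characters `y` of `B` with `(Ta)^(y) ≠ 0` for some `a`. -/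
def OmegaB' (T : A →ₗ[ℂ] B) : Set (characterSpace ℂ B) := {y | ∃ a : A, y (T a) ≠ 0}

/-- `V` is a vanishing set for the functional `T^t y` in the one-point
compactification of `Ω_A`. -/
def IsVanishingSet (T : A →ₗ[ℂ] B) (y : characterSpace ℂ B)
    (V : Set (OnePoint (characterSpace ℂ A))) : Prop :=
  IsOpen V ∧ ∀ a : A, ((fun x : characterSpace ℂ A => (x : OnePoint (characterSpace ℂ A)))
      '' gelfCoz a ⊆ V) → y (T a) = 0

/-- The support of the functional `T^t y`: the complement of the union of its
vanishing open sets. -/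
def suppFunctional (T : A →ₗ[ℂ] B) (y : characterSpace ℂ B) :
    Set (OnePoint (characterSpace ℂ A)) :=
  {z | ∀ V : Set (OnePoint (characterSpace ℂ A)), IsVanishingSet T y V → z ∉ V}

/-- Vanishing ideal of a set of characters. -/
def vanishingIdealOf (S : Set (characterSpace ℂ A)) : Ideal A where
  carrier := {a | ∀ x ∈ S, x a = 0}
  add_mem' := by intro a b ha hb x hx; simp [map_add, ha x hx, hb x hx]
  zero_mem' := by intro x hx; simp
  smul_mem' := by intro r a ha x hx; simp [smul_eq_mul, map_mul, ha x hx]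

/-- In a regular commutative Banach algebra, given a closed set `K` inside an open set `U` of
the character space, there is an element whose Gelfand transform is `1` on `K` and `0` off `U`. -/
lemma exists_one_on_closed [CompleteSpace A] (hreg : Regular A)
    {K U : Set (characterSpace ℂ A)} (hK : IsClosed K) (hU : IsOpen U) (hKU : K ⊆ U) :
    ∃ e : A, (∀ x ∈ K, x e = 1) ∧ ∀ x : characterSpace ℂ A, x ∉ U → x e = 0 := by
  have h1 : (1 : A) ∈ vanishingIdealOf Uᶜ ⊔ vanishingIdealOf K := by
    by_contra h
    obtain ⟨M, hM, hJM⟩ := Ideal.exists_le_maximal _ ((Ideal.ne_top_iff_one _).2 h)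
    set φ := M.toCharacterSpace with hφdef
    have hφ : ∀ a ∈ vanishingIdealOf Uᶜ ⊔ vanishingIdealOf K, φ a = 0 :=
      fun a ha => M.toCharacterSpace_apply_eq_zero_of_mem (hJM ha)
    have hφK : φ ∈ K := by
      by_contra hφK
      obtain ⟨a, ha1, ha0⟩ := hreg φ Kᶜ hK.isOpen_compl hφK
      have hmem : a ∈ vanishingIdealOf K := fun x hx => ha0 x (by simp [hx])
      exact one_ne_zero ((hφ a (Ideal.mem_sup_right hmem)) ▸ ha1 : (0:ℂ) = 1).symm
    have hφU : φ ∉ U := by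
      intro hφU
      obtain ⟨a, ha1, ha0⟩ := hreg φ U hU hφU
      have hmem : a ∈ vanishingIdealOf Uᶜ := fun x hx => ha0 x hx
      exact one_ne_zero ((hφ a (Ideal.mem_sup_left hmem)) ▸ ha1 : (0:ℂ) = 1).symm
    exact hφU (hKU hφK)
  obtain ⟨a, haI, b, hbI, hab⟩ := Submodule.mem_sup.1 h1
  refine ⟨a, fun x hx => ?_, fun x hx => haI x hx⟩
  have h2 := congrArg x hab
  rw [map_add, map_one, hbI x hx, add_zero] at h2
  exact h2

lemma sum_prod_telescope (c : ℕ → ℂ) (n : ℕ) :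
    ∑ i ∈ Finset.range n, c i * ∏ j ∈ Finset.range i, (1 - c j)
      = 1 - ∏ i ∈ Finset.range n, (1 - c i) := by
  induction n with
  | zero => simp
  | succ n ih => rw [Finset.sum_range_succ, Finset.prod_range_succ, ih]; ring

/-- for a separating map `T` between semisimple regular commutative Banach
algebras, the support of `T^t y` is a singleton for every `y ∈ Ω_B'`. -/
theorem support_of_separating_functional_singleton
    [CompleteSpace A] [CompleteSpace B]
    (hsemiA : Semisimple A) (hregA : Regular A) (hsemiB : Semisimple B) (hregB : Regular B)
    (T : A →ₗ[ℂ] B) (hT : Separating T) :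
    ∀ y ∈ OmegaB' T, ∃ z : OnePoint (characterSpace ℂ A), suppFunctional T y = {z} := by
  intro y hy
  -- uniqueness of the support point
  have huniq : ∀ z1 ∈ suppFunctional T y, ∀ z2 ∈ suppFunctional T y, z1 = z2 := by
    intro z1 hz1 z2 hz2
    by_contra hne
    obtain ⟨U1, U2, hU1, hU2, hz1U, hz2U, hdisj⟩ := t2_separation hne
    have key : ∀ (U : Set (OnePoint (characterSpace ℂ A))), IsOpen U →
        ∀ z ∈ suppFunctional T y, z ∈ U →
        ∃ a : A, ((fun x : characterSpace ℂ A => (x : OnePoint (characterSpace ℂ A)))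
          '' gelfCoz a ⊆ U) ∧ y (T a) ≠ 0 := by
      intro U hUo z hz hzU
      by_contra h
      push_neg at h
      exact hz U ⟨hUo, h⟩ hzU
    obtain ⟨a1, ha1s, ha1⟩ := key U1 hU1 z1 hz1 hz1U
    obtain ⟨a2, ha2s, ha2⟩ := key U2 hU2 z2 hz2 hz2U
    have hmul : a1 * a2 = 0 := by
      apply hsemiA
      intro x
      rw [map_mul]
      rcases eq_or_ne (x a1) 0 with h | h
      · rw [h, zero_mul]
      · rcases eq_or_ne (x a2) 0 with h2 | h2
        · rw [h2, mul_zero]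
        · exact absurd (ha2s ⟨x, h2, rfl⟩) (Set.disjoint_left.1 hdisj (ha1s ⟨x, h, rfl⟩))
    have h0 : y (T a1) * y (T a2) = 0 := by
      rw [← map_mul, hT a1 a2 hmul, map_zero]
    rcases mul_eq_zero.1 h0 with h | h
    exacts [ha1 h, ha2 h]
  -- nonemptiness of the support
  have hne : (suppFunctional T y).Nonempty := by
    rw [Set.nonempty_iff_ne_empty]
    intro hemp
    have hcov : ∀ z : OnePoint (characterSpace ℂ A), ∃ V, IsVanishingSet T y V ∧ z ∈ V := by
      intro z
      by_contra h
      push_neg at h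
      have hzs : z ∈ suppFunctional T y := fun V hV => h V hV
      rw [hemp] at hzs
      exact hzs
    choose Vz hVz hVzmem using hcov
    obtain ⟨t, ht⟩ := isCompact_univ.elim_finite_subcover Vz (fun z => (hVz z).1)
      (fun z _ => Set.mem_iUnion.2 ⟨z, hVzmem z⟩)
    set n := Fintype.card ↥t with hn
    set ee := Fintype.equivFin ↥t with hee
    set Vf : Fin n → Set (OnePoint (characterSpace ℂ A)) :=
      fun i => Vz ((ee.symm i) : OnePoint (characterSpace ℂ A)) with hVfdef
    have hVf : ∀ i, IsVanishingSet T y (Vf i) := fun i => hVz _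
    have hVfcov : ∀ x : characterSpace ℂ A,
        ∃ i, (x : OnePoint (characterSpace ℂ A)) ∈ Vf i := by
      intro x
      have hx := ht (Set.mem_univ (x : OnePoint (characterSpace ℂ A)))
      rw [Set.mem_iUnion₂] at hx
      obtain ⟨z, hzt, hzm⟩ := hx
      exact ⟨ee ⟨z, hzt⟩, by simpa [hVfdef] using hzm⟩
    set U : Fin n → Set (characterSpace ℂ A) := fun i =>
      (fun x : characterSpace ℂ A => (x : OnePoint (characterSpace ℂ A))) ⁻¹' Vf i with hUdef
    have hUo : ∀ i, IsOpen (U i) := fun i => (hVf i).1.preimage OnePoint.continuous_coe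
    obtain ⟨v, hvcov, hvo, hvcl⟩ := exists_subset_iUnion_closure_subset isClosed_univ hUo
      (fun x _ => Set.toFinite _) (fun x _ => Set.mem_iUnion.2 (hVfcov x))
    have he : ∀ i : Fin n, ∃ e : A,
        (∀ x ∈ closure (v i), x e = 1) ∧ ∀ x, x ∉ U i → x e = 0 :=
      fun i => exists_one_on_closed hregA isClosed_closure (hUo i) (hvcl i)
    choose e he1 he0 using he
    set E : ℕ → A := fun i => if h : i < n then e ⟨i, h⟩ else 0 with hE
    have hTa0 : ∀ a : A, y (T a) = 0 := by
      intro a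
      set u : ℕ → A := fun i => (E i * ∏ j ∈ Finset.range i, (1 - E j)) * a with hu
      have hsum : ∑ i ∈ Finset.range n, u i = a := by
        apply sub_eq_zero.1
        apply hsemiA
        intro x
        have hx : x (∑ i ∈ Finset.range n, u i)
            = (1 - ∏ i ∈ Finset.range n, (1 - x (E i))) * x a := by
          rw [map_sum, ← sum_prod_telescope (fun i => x (E i)) n, Finset.sum_mul]
          refine Finset.sum_congr rfl fun i _ => ?_
          simp only [hu, map_mul, map_prod, map_sub, map_one]
        have hprod : ∏ i ∈ Finset.range n, (1 - x (E i)) = 0 := by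
          have hxv := hvcov (Set.mem_univ x)
          rw [Set.mem_iUnion] at hxv
          obtain ⟨i, hi⟩ := hxv
          refine Finset.prod_eq_zero (Finset.mem_range.2 i.isLt) ?_
          have h1 : x (E i.1) = 1 := by
            have := he1 i x (subset_closure hi)
            simpa [hE, i.isLt] using this
          rw [h1, sub_self]
        rw [map_sub, hx, hprod, sub_zero, one_mul, sub_self]
      rw [← hsum, map_sum, map_sum]
      refine Finset.sum_eq_zero fun i hi => ?_
      rw [Finset.mem_range] at hi
      refine (hVf ⟨i, hi⟩).2 (u i) ?_
      rintro _ ⟨x, hx, rfl⟩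
      have hxe : x (E i) ≠ 0 := by
        intro h0
        exact hx (by simp only [hu, map_mul, h0, zero_mul])
      have hxU : x ∈ U ⟨i, hi⟩ := by
        by_contra hxu
        exact hxe (by simpa [hE, hi] using he0 ⟨i, hi⟩ x hxu)
      exact hxU
    obtain ⟨a, ha⟩ := hy
    exact ha (hTa0 a)
  obtain ⟨z, hz⟩ := hne
  exact ⟨z, Set.eq_singleton_iff_unique_mem.2 ⟨hz, fun w hw => huniq w hw z hz⟩⟩
end

section
/- Let T be a bijective separating map from a Tauberian algebra A satisfying condition (M) onto a D-uniformly regular commutative Banach algebra B. Then the function X on Ω_B (with (Ta)^(y) = X(y)·â(t(y))) is bounded away from zero: there is r > 0 with |X(y)| ≥ r for all y ∈ Ω_B. -/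
open WeakDual Topology Filter

variable {A B : Type*} [NormedCommRing A] [NormedAlgebra ℂ A]
  [NormedCommRing B] [NormedAlgebra ℂ B]

/-- for a bijective separating map `T` from a Tauberian algebra satisfying
condition (M) onto a `D`-uniformly regular algebra `B`, the weight function `X` is bounded
away from zero. -/
theorem weight_function_bounded_below
    [CompleteSpace A] [CompleteSpace B]
    (htaub : Tauberian A) (hM : ConditionM A)
    (D : ℝ) (hD : 0 < D) (hregB : DUniformlyRegular B D)
    (T : A →ₗ[ℂ] B) (hT : Separating T) (hbij : Function.Bijective T)
    (hcont : Continuous T)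
    (t : characterSpace ℂ B → characterSpace ℂ A) (htinj : Function.Injective t)
    (X : characterSpace ℂ B → ℂ) (hXcont : Continuous X) (hXne : ∀ y, X y ≠ 0)
    (heq : ∀ (a : A) (y : characterSpace ℂ B), y (T a) = X y * (t y) a) :
    ∃ r > (0:ℝ), ∀ y : characterSpace ℂ B, r ≤ ‖X y‖ := by
  set f : A →L[ℂ] B := ⟨T, hcont⟩ with hf
  have hker : LinearMap.ker (f : A →ₗ[ℂ] B) = ⊥ := LinearMap.ker_eq_bot_of_injective hbij.1
  have hrange : LinearMap.range (f : A →ₗ[ℂ] B) = ⊤ := LinearMap.range_eq_top_of_surjective (f : A →ₗ[ℂ] B) hbij.2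
  let e := ContinuousLinearEquiv.ofBijective f hker hrange
  set S : B →L[ℂ] A := e.symm.toContinuousLinearMap with hS
  set M : ℝ := ‖S‖ * (D + 1) * ‖(1 : A)‖ with hM'
  have hM0 : 0 ≤ M := by positivity
  refine ⟨(M + 1)⁻¹, by positivity, fun y => ?_⟩
  obtain ⟨b, hb1, -, hbnorm⟩ := hregB y Set.univ isOpen_univ (Set.mem_univ y) 1 one_pos
  set a : A := S b with ha
  have hTa : T a = b := e.apply_symm_apply b
  have h1 : (1 : ℂ) = X y * (t y) a := by
    rw [← hb1, ← hTa, heq]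
  have hchar : ‖(t y) a‖ ≤ ‖a‖ * ‖(1 : A)‖ := AlgHom.norm_apply_le_self_mul_norm_one (t y) a
  have hanorm : ‖a‖ ≤ ‖S‖ * (D + 1) := by
    calc ‖a‖ ≤ ‖S‖ * ‖b‖ := S.le_opNorm b
    _ ≤ ‖S‖ * (D + 1) := by
        exact mul_le_mul_of_nonneg_left hbnorm (norm_nonneg S)
  have key : (1 : ℝ) ≤ ‖X y‖ * (M + 1) := by
    have := congrArg norm h1
    rw [norm_one, norm_mul] at this
    calc (1 : ℝ) = ‖X y‖ * ‖(t y) a‖ := this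
    _ ≤ ‖X y‖ * (M + 1) := by
        refine mul_le_mul_of_nonneg_left ?_ (norm_nonneg _)
        calc ‖(t y) a‖ ≤ ‖a‖ * ‖(1 : A)‖ := hchar
        _ ≤ ‖S‖ * (D + 1) * ‖(1 : A)‖ :=
            mul_le_mul_of_nonneg_right hanorm (norm_nonneg _)
        _ ≤ M + 1 := by rw [hM']; linarith
  rw [inv_le_iff_one_le_mul₀ (by positivity)]
  linarith [key, mul_comm ‖X y‖ (M+1)]
end

section
/- Let A and B be commutative semisimple regular Tauberian Banach algebras with 1-bounded approximate identities, and suppose T : A → B is a bounded bijection such that (Ta)^(y) = X(y)·â(t(y)) for all a ∈ A, y ∈ Ω_B, where t : Ω_B → Ω_A is a homeomorphism and X is continuous. Then X satisfies the BSE-condition: there is C > 0 such that for all y₁,…,y_n ∈ Ω_B and α₁,…,α_n ∈ ℂ, |Σ α_i X(y_i)| ≤ C‖Σ α_i y_i‖_{B*}, with C = ‖T‖. -/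
open WeakDual Topology Filter

variable {A B : Type*} [NormedCommRing A] [NormedAlgebra ℂ A]
  [NormedCommRing B] [NormedAlgebra ℂ B]

/-- An approximate identity bounded in norm by `D`. -/
def BddApproxId (A : Type*) [NormedCommRing A] [NormedAlgebra ℂ A] (D : ℝ) : Prop :=
  ∃ (ι : Type) (l : Filter ι) (_ : l.NeBot) (e : ι → A),
    (∀ i, ‖e i‖ ≤ D) ∧ ∀ a : A, Tendsto (fun i => a * e i) l (𝓝 a)

/-- for a bounded bijection `T` with `(Ta)^(y) = X(y)·â(t(y))` between
semisimple regular Tauberian algebras with `1`-bounded approximate identities, the weight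
`X` satisfies the BSE-condition with constant `C = ‖T‖`. -/
theorem weight_satisfies_BSE_condition
    [CompleteSpace A] [CompleteSpace B]
    (hsemiA : Semisimple A) (hregA : Regular A) (htaubA : Tauberian A)
    (hsemiB : Semisimple B) (hregB : Regular B) (htaubB : Tauberian B)
    (haiA : BddApproxId A 1) (haiB : BddApproxId B 1)
    (T : A →L[ℂ] B) (hbij : Function.Bijective T)
    (t : characterSpace ℂ B ≃ₜ characterSpace ℂ A)
    (X : characterSpace ℂ B → ℂ) (hXcont : Continuous X)
    (heq : ∀ (a : A) (y : characterSpace ℂ B), y (T a) = X y * (t y) a) :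
    ∀ (n : ℕ) (y : Fin n → characterSpace ℂ B) (α : Fin n → ℂ),
      ‖∑ i, α i * X (y i)‖ ≤
        ‖T‖ * ‖∑ i, α i • WeakDual.toStrongDual ((y i : WeakDual ℂ B))‖ := by
  obtain ⟨ι, l, hne, e, hbd, hconv⟩ := haiA
  intro n y α
  set φ := ∑ i, α i • WeakDual.toStrongDual ((y i : WeakDual ℂ B)) with hφ
  -- e j → 1 in A
  have he1 : Tendsto e l (𝓝 (1 : A)) := by
    have := hconv 1
    simpa [one_mul] using this
  -- evaluation of characters along e j tends to 1
  have hchar : ∀ x : characterSpace ℂ A, Tendsto (fun j => x (e j)) l (𝓝 1) := by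
    intro x
    have hc : Continuous fun a : A => x a := map_continuous x
    have := (hc.tendsto (1 : A)).comp he1
    simpa [map_one, Function.comp_def] using this
  -- key identity
  have key : ∀ j, (∑ i, α i * X (y i) * (t (y i)) (e j)) = φ (T (e j)) := by
    intro j
    rw [hφ]
    rw [ContinuousLinearMap.sum_apply]
    refine Finset.sum_congr rfl fun i _ => ?_
    rw [ContinuousLinearMap.smul_apply]
    have : (WeakDual.toStrongDual ((y i : WeakDual ℂ B))) (T (e j)) = (y i) (T (e j)) := rfl
    rw [this, heq, smul_eq_mul, mul_assoc]
  -- convergence of the sums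
  have hlim : Tendsto (fun j => ∑ i, α i * X (y i) * (t (y i)) (e j)) l
      (𝓝 (∑ i, α i * X (y i))) := by
    have : Tendsto (fun j => ∑ i, α i * X (y i) * (t (y i)) (e j)) l
        (𝓝 (∑ i, α i * X (y i) * 1)) := by
      refine tendsto_finset_sum _ fun i _ => ?_
      exact (hchar (t (y i))).const_mul _
    simpa using this
  -- bound
  have hbound : ∀ j, ‖∑ i, α i * X (y i) * (t (y i)) (e j)‖ ≤ ‖T‖ * ‖φ‖ := by
    intro j
    rw [key j]
    calc ‖φ (T (e j))‖ ≤ ‖φ‖ * ‖T (e j)‖ := φ.le_opNorm _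
      _ ≤ ‖φ‖ * (‖T‖ * ‖e j‖) := by
          exact mul_le_mul_of_nonneg_left (T.le_opNorm _) (norm_nonneg _)
      _ ≤ ‖φ‖ * (‖T‖ * 1) := by
          refine mul_le_mul_of_nonneg_left ?_ (norm_nonneg _)
          exact mul_le_mul_of_nonneg_left (hbd j) (norm_nonneg _)
      _ = ‖T‖ * ‖φ‖ := by ring
  have := le_of_tendsto (hlim.norm) (Filter.Eventually.of_forall hbound)
  exact this
end
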